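/- Modulo IPC-provable equivalence, the set NNIL of formulas (over a fixed finite set of atoms) is finite. -/

import Mathlib

inductive Fm : Type
  | bot : Fm
  | atom : ℕ → Fm
  | and : Fm → Fm → Fm
  | or : Fm → Fm → Fm
  | imp : Fm → Fm → Fm
deriving DecidableEq

namespace Fm

def neg (A : Fm) : Fm := A.imp .bot
def top : Fm := Fm.bot.imp .bot
def iff (A B : Fm) : Fm := (A.imp B).and (B.imp A)

def subst (θ : ℕ → Fm) : Fm → Fm
  | bot => bot
  | atom n => θ n
  | and A B => (A.subst θ).and (B.subst θ)
  | or A B => (A.subst θ).or (B.subst θ)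
  | imp A B => (A.subst θ).imp (B.subst θ)

def atoms : Fm → Finset ℕ
  | bot => ∅
  | atom n => {n}
  | and A B => A.atoms ∪ B.atoms
  | or A B => A.atoms ∪ B.atoms
  | imp A B => A.atoms ∪ B.atoms

/-- maximal nesting of implications in the left/overall: `c→`. -/
def cimp : Fm → ℕ
  | bot => 0
  | atom _ => 0
  | and A B => max A.cimp B.cimp
  | or A B => max A.cimp B.cimp
  | imp A B => 1 + max A.cimp B.cimp

end Fm

def bigAndL (l : List Fm) : Fm := l.foldr Fm.and Fm.top
def bigOrL (l : List Fm) : Fm := l.foldr Fm.or Fm.bot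

/-- nonempty disjunction -/
def bigOrNE : Fm → List Fm → Fm
  | A, [] => A
  | A, B :: l => A.or (bigOrNE B l)

/-- Hilbert-style intuitionistic propositional calculus. -/
inductive IPC : Fm → Prop
  | imp_k (A B : Fm) : IPC (A.imp (B.imp A))
  | imp_s (A B C : Fm) : IPC ((A.imp (B.imp C)).imp ((A.imp B).imp (A.imp C)))
  | and_intro (A B : Fm) : IPC (A.imp (B.imp (A.and B)))
  | and_left (A B : Fm) : IPC ((A.and B).imp A)
  | and_right (A B : Fm) : IPC ((A.and B).imp B)
  | or_inl (A B : Fm) : IPC (A.imp (A.or B))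
  | or_inr (A B : Fm) : IPC (B.imp (A.or B))
  | or_elim (A B C : Fm) : IPC ((A.imp C).imp ((B.imp C).imp ((A.or B).imp C)))
  | exfalso (A : Fm) : IPC (Fm.bot.imp A)
  | mp {A B : Fm} : IPC (A.imp B) → IPC A → IPC B

/-- Γ-preservativity in the logic T : `A ⊳_{T,Γ} B`. -/
def Pres (T : Fm → Prop) (Γ : Set Fm) (A B : Fm) : Prop :=
  ∀ E ∈ Γ, T (E.imp A) → T (E.imp B)

/-- substitutions are identity on the parameters. -/
def IdOnPar (par : Finset ℕ) (θ : ℕ → Fm) : Prop :=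
  ∀ p ∈ par, θ p = Fm.atom p

/-- implication-free formulas. -/
inductive NI : Fm → Prop
  | bot : NI .bot
  | atom (n : ℕ) : NI (.atom n)
  | and {A B : Fm} : NI A → NI B → NI (A.and B)
  | or {A B : Fm} : NI A → NI B → NI (A.or B)

/-- No Nested Implications in the Left. -/
inductive NNIL : Fm → Prop
  | bot : NNIL .bot
  | atom (n : ℕ) : NNIL (.atom n)
  | and {A B : Fm} : NNIL A → NNIL B → NNIL (A.and B)
  | or {A B : Fm} : NNIL A → NNIL B → NNIL (A.or B)
  | imp {A B : Fm} : NI A → NNIL B → NNIL (A.imp B)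

def IPCPrime (A : Fm) : Prop :=
  ∀ B C, IPC (A.imp (B.or C)) → IPC (A.imp B) ∨ IPC (A.imp C)

/-- T-components: `⋀Γ ∧ ⋀Δ`, Γ atoms, Δ implications with atomic
antecedents not T-provable from Γ. -/
def IsComponentOver (T : Fm → Prop) (B : Fm) : Prop :=
  ∃ (as : List ℕ) (imps : List (ℕ × Fm)),
    B = (bigAndL (as.map Fm.atom)).and
          (bigAndL (imps.map fun p => (Fm.atom p.1).imp p.2)) ∧
    ∀ p ∈ imps, ¬ T ((bigAndL (as.map Fm.atom)).imp (Fm.atom p.1))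


/-! ### Infrastructure: provability in context -/

inductive Th (G : List Fm) : Fm → Prop
  | ax {A} : IPC A → Th G A
  | hyp {A} : A ∈ G → Th G A
  | mp {A B} : Th G (A.imp B) → Th G A → Th G B

namespace Th

theorem toIPC {A : Fm} (h : Th [] A) : IPC A := by
  induction h with
  | ax h => exact h
  | hyp h => simp at h
  | mp _ _ ih1 ih2 => exact ih1.mp ih2

theorem weaken {G G' : List Fm} {A : Fm} (hs : ∀ E ∈ G, E ∈ G') (h : Th G A) :
    Th G' A := by
  induction h with
  | ax h => exact .ax h
  | hyp h => exact .hyp (hs _ h)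
  | mp _ _ ih1 ih2 => exact ih1.mp ih2

theorem axmp {G : List Fm} {A B : Fm} (h : IPC (A.imp B)) (h2 : Th G A) : Th G B :=
  (Th.ax h).mp h2

theorem id {G : List Fm} (A : Fm) : Th G (A.imp A) :=
  ((Th.ax (IPC.imp_s A (A.imp A) A)).mp (.ax (IPC.imp_k A (A.imp A)))).mp
    (.ax (IPC.imp_k A A))

/-- Deduction theorem. -/
theorem ded {G : List Fm} {A B : Fm} (h : Th (A :: G) B) : Th G (A.imp B) := by
  induction h with
  | ax h => exact (Th.ax (IPC.imp_k _ A)).mp (.ax h)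
  | hyp h =>
    rcases List.mem_cons.1 h with rfl | h
    · exact Th.id _
    · exact (Th.ax (IPC.imp_k _ A)).mp (.hyp h)
  | mp _ _ ih1 ih2 => exact ((Th.ax (IPC.imp_s _ _ _)).mp ih1).mp ih2

theorem undED {G : List Fm} {A B : Fm} (h : Th G (A.imp B)) : Th (A :: G) B :=
  (h.weaken (fun _ hE => List.mem_cons_of_mem _ hE)).mp (.hyp (List.mem_cons_self))

/-- Cut rule for contexts. -/
theorem cut {G G' : List Fm} {A : Fm} (hs : ∀ E ∈ G', Th G E) (h : Th G' A) :
    Th G A := by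
  induction h with
  | ax h => exact .ax h
  | hyp h => exact hs _ h
  | mp _ _ ih1 ih2 => exact ih1.mp ih2

theorem impL {G : List Fm} {A B C : Fm} (h1 : Th G (A.imp B)) (h2 : Th G (B.imp C)) :
    Th G (A.imp C) :=
  ded (h2.weaken (fun _ hE => List.mem_cons_of_mem _ hE) |>.mp (undED h1))

theorem and_intro {G : List Fm} {A B : Fm} (h1 : Th G A) (h2 : Th G B) :
    Th G (A.and B) := ((Th.ax (IPC.and_intro A B)).mp h1).mp h2

theorem and_left {G : List Fm} {A B : Fm} (h : Th G (A.and B)) : Th G A :=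
  (Th.ax (IPC.and_left A B)).mp h

theorem and_right {G : List Fm} {A B : Fm} (h : Th G (A.and B)) : Th G B :=
  (Th.ax (IPC.and_right A B)).mp h

theorem or_inl {G : List Fm} {A : Fm} (B : Fm) (h : Th G A) : Th G (A.or B) :=
  (Th.ax (IPC.or_inl A B)).mp h

theorem or_inr {G : List Fm} {B : Fm} (A : Fm) (h : Th G B) : Th G (A.or B) :=
  (Th.ax (IPC.or_inr A B)).mp h

theorem or_elim {G : List Fm} {A B C : Fm} (h : Th G (A.or B))
    (h1 : Th (A :: G) C) (h2 : Th (B :: G) C) : Th G C :=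
  (((Th.ax (IPC.or_elim A B C)).mp (ded h1)).mp (ded h2)).mp h

theorem exfalso {G : List Fm} (A : Fm) (h : Th G .bot) : Th G A :=
  (Th.ax (IPC.exfalso A)).mp h

theorem top_ (G : List Fm) : Th G Fm.top := Th.id _

theorem iff_intro {G : List Fm} {A B : Fm} (h1 : Th G (A.imp B)) (h2 : Th G (B.imp A)) :
    Th G (A.iff B) := h1.and_intro h2

theorem iff_mp {G : List Fm} {A B : Fm} (h : Th G (A.iff B)) : Th G (A.imp B) :=
  h.and_left

theorem iff_mpr {G : List Fm} {A B : Fm} (h : Th G (A.iff B)) : Th G (B.imp A) :=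
  h.and_right

theorem iff_refl {G : List Fm} (A : Fm) : Th G (A.iff A) := iff_intro (id A) (id A)

theorem iff_symm {G : List Fm} {A B : Fm} (h : Th G (A.iff B)) : Th G (B.iff A) :=
  iff_intro h.iff_mpr h.iff_mp

theorem iff_trans {G : List Fm} {A B C : Fm} (h1 : Th G (A.iff B)) (h2 : Th G (B.iff C)) :
    Th G (A.iff C) :=
  iff_intro (h1.iff_mp.impL h2.iff_mp) (h2.iff_mpr.impL h1.iff_mpr)

end Th


/-! ### Big conjunctions / disjunctions -/

namespace Th

theorem bigAnd_intro {G : List Fm} {l : List Fm} (h : ∀ a ∈ l, Th G a) :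
    Th G (bigAndL l) := by
  induction l with
  | nil => exact top_ G
  | cons a l ih =>
    exact (h a (List.mem_cons_self)).and_intro
      (ih fun b hb => h b (List.mem_cons_of_mem _ hb))

theorem bigAnd_elim {G : List Fm} {l : List Fm} {a : Fm} (ha : a ∈ l)
    (h : Th G (bigAndL l)) : Th G a := by
  induction l with
  | nil => simp at ha
  | cons b l ih =>
    rcases List.mem_cons.1 ha with rfl | ha
    · exact h.and_left
    · exact ih ha h.and_right

theorem bigOr_intro {G : List Fm} {l : List Fm} {a : Fm} (ha : a ∈ l) :
    Th G (a.imp (bigOrL l)) := by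
  induction l with
  | nil => simp at ha
  | cons b l ih =>
    rcases List.mem_cons.1 ha with rfl | ha
    · exact ded (or_inl _ (hyp (List.mem_cons_self)))
    · exact ded (or_inr _ (undED (ih ha)))

theorem bigOr_elim {G : List Fm} {l : List Fm} {C : Fm}
    (h : ∀ a ∈ l, Th G (a.imp C)) : Th G ((bigOrL l).imp C) := by
  induction l with
  | nil => exact ded (exfalso _ (hyp (List.mem_cons_self)))
  | cons a l ih =>
    exact ((Th.ax (IPC.or_elim a (bigOrL l) C)).mp (h a (List.mem_cons_self))).mp
      (ih fun b hb => h b (List.mem_cons_of_mem _ hb))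

/-! congruence lemmas -/

theorem and_congr {G : List Fm} {A A' B B' : Fm} (h1 : Th G (A.iff A'))
    (h2 : Th G (B.iff B')) : Th G ((A.and B).iff (A'.and B')) := by
  refine iff_intro (ded ?_) (ded ?_)
  · exact ((h1.iff_mp.weaken (fun _ h => List.mem_cons_of_mem _ h)).mp
      (hyp (List.mem_cons_self)).and_left).and_intro
      ((h2.iff_mp.weaken (fun _ h => List.mem_cons_of_mem _ h)).mp
      (hyp (List.mem_cons_self)).and_right)
  · exact ((h1.iff_mpr.weaken (fun _ h => List.mem_cons_of_mem _ h)).mp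
      (hyp (List.mem_cons_self)).and_left).and_intro
      ((h2.iff_mpr.weaken (fun _ h => List.mem_cons_of_mem _ h)).mp
      (hyp (List.mem_cons_self)).and_right)

theorem or_congr {G : List Fm} {A A' B B' : Fm} (h1 : Th G (A.iff A'))
    (h2 : Th G (B.iff B')) : Th G ((A.or B).iff (A'.or B')) :=
  iff_intro
    (((Th.ax (IPC.or_elim A B _)).mp (h1.iff_mp.impL (.ax (IPC.or_inl _ _)))).mp
      (h2.iff_mp.impL (.ax (IPC.or_inr _ _))))
    (((Th.ax (IPC.or_elim A' B' _)).mp (h1.iff_mpr.impL (.ax (IPC.or_inl _ _)))).mp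
      (h2.iff_mpr.impL (.ax (IPC.or_inr _ _))))

theorem imp_congr_hyp {G : List Fm} {X B B' : Fm} (h : Th (X :: G) (B.iff B')) :
    Th G ((X.imp B).iff (X.imp B')) := by
  have wk : ∀ E ∈ (X :: G), E ∈ (X :: X.imp B :: G) := by
    intro E hE; rcases List.mem_cons.1 hE with rfl | hE
    · exact List.mem_cons_self
    · exact List.mem_cons_of_mem _ (List.mem_cons_of_mem _ hE)
  have wk' : ∀ E ∈ (X :: G), E ∈ (X :: X.imp B' :: G) := by
    intro E hE; rcases List.mem_cons.1 hE with rfl | hE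
    · exact List.mem_cons_self
    · exact List.mem_cons_of_mem _ (List.mem_cons_of_mem _ hE)
  refine iff_intro (ded (ded ?_)) (ded (ded ?_))
  · exact (h.iff_mp.weaken wk).mp
      ((hyp (List.mem_cons_of_mem _ (List.mem_cons_self))).mp
        (hyp (List.mem_cons_self)))
  · exact (h.iff_mpr.weaken wk').mp
      ((hyp (List.mem_cons_of_mem _ (List.mem_cons_self))).mp
        (hyp (List.mem_cons_self)))

theorem imp_congr_ant {G : List Fm} {A A' B : Fm} (h : Th G (A.iff A')) :
    Th G ((A.imp B).iff (A'.imp B)) :=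
  iff_intro (ded (h.iff_mpr.weaken (fun _ h => List.mem_cons_of_mem _ h) |>.impL
      (hyp (List.mem_cons_self))))
    (ded (h.iff_mp.weaken (fun _ h => List.mem_cons_of_mem _ h) |>.impL
      (hyp (List.mem_cons_self))))

theorem top_imp {G : List Fm} (B : Fm) : Th G ((Fm.top.imp B).iff B) :=
  iff_intro (ded ((hyp (List.mem_cons_self)).mp (top_ _)))
    (ded (ded (hyp (List.mem_cons_of_mem _ (List.mem_cons_self)))))

end Th

/-! ### DNF representation -/

noncomputable def conjFm (c : Finset Fm) : Fm := bigAndL c.toList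

noncomputable def toFm (D : Finset (Finset Fm)) : Fm := bigOrL (D.toList.map conjFm)

def dand (D E : Finset (Finset Fm)) : Finset (Finset Fm) :=
  D.biUnion fun c => E.image fun c' => c ∪ c'

namespace Th

theorem conj_intro' {G : List Fm} {c : Finset Fm}
    (h : ∀ u ∈ c, Th G u) : Th G (conjFm c) :=
  bigAnd_intro fun a ha => h a (Finset.mem_toList.1 ha)

theorem conj_elim {G : List Fm} {c : Finset Fm} {u : Fm} (hu : u ∈ c) :
    Th G ((conjFm c).imp u) :=
  ded (bigAnd_elim (Finset.mem_toList.2 hu) (hyp (List.mem_cons_self)))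

theorem conj_intro {G : List Fm} {c : Finset Fm} {X : Fm}
    (h : ∀ u ∈ c, Th G (X.imp u)) : Th G (X.imp (conjFm c)) :=
  ded (bigAnd_intro fun a ha => undED (h a (Finset.mem_toList.1 ha)))

theorem toFm_intro {G : List Fm} {D : Finset (Finset Fm)} {c : Finset Fm} (hc : c ∈ D) :
    Th G ((conjFm c).imp (toFm D)) :=
  bigOr_intro (List.mem_map.2 ⟨c, Finset.mem_toList.2 hc, rfl⟩)

theorem toFm_elim {G : List Fm} {D : Finset (Finset Fm)} {X : Fm}
    (h : ∀ c ∈ D, Th G ((conjFm c).imp X)) : Th G ((toFm D).imp X) :=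
  bigOr_elim fun a ha => by
    obtain ⟨c, hc, rfl⟩ := List.mem_map.1 ha
    exact h c (Finset.mem_toList.1 hc)

theorem conj_single {G : List Fm} (u : Fm) : Th G ((conjFm {u}).iff u) := by
  rw [conjFm, Finset.toList_singleton]
  exact iff_intro (ded (hyp (List.mem_cons_self)).and_left)
    (ded ((hyp (List.mem_cons_self)).and_intro (top_ _)))

theorem toFm_single {G : List Fm} (c : Finset Fm) : Th G ((toFm {c}).iff (conjFm c)) := by
  rw [toFm, Finset.toList_singleton]
  refine iff_intro ?_ (ded (or_inl _ (hyp (List.mem_cons_self))))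
  exact bigOr_elim (l := [conjFm c]) fun a ha => by
    simp only [List.mem_singleton] at ha; subst ha; exact id _

theorem toFm_empty {G : List Fm} : Th G ((toFm ∅).iff Fm.bot) := by
  rw [toFm, Finset.toList_empty]
  exact iff_refl _

theorem toFm_dand {G : List Fm} (D E : Finset (Finset Fm)) :
    Th G ((toFm (dand D E)).iff ((toFm D).and (toFm E))) := by
  refine iff_intro (toFm_elim fun c hc => ?_) ?_
  · simp only [dand, Finset.mem_biUnion, Finset.mem_image] at hc
    obtain ⟨c1, hc1, c2, hc2, rfl⟩ := hc
    refine ded (((toFm_intro hc1).weaken (fun _ h => List.mem_cons_of_mem _ h)).mp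
        ((conj_intro fun u hu => conj_elim (Finset.mem_union_left _ hu)).undED) |>.and_intro
      (((toFm_intro hc2).weaken (fun _ h => List.mem_cons_of_mem _ h)).mp
        ((conj_intro fun u hu => conj_elim (Finset.mem_union_right _ hu)).undED)))
  · refine ded ?_
    have h1 : Th ((toFm D).and (toFm E) :: G) (toFm D) := (hyp (List.mem_cons_self)).and_left
    have h2 : Th ((toFm D).and (toFm E) :: G) (toFm E) := (hyp (List.mem_cons_self)).and_right
    refine (toFm_elim (X := toFm (dand D E)) fun c1 hc1 => ded ?_).mp h1
    have h2' : Th (conjFm c1 :: (toFm D).and (toFm E) :: G) (toFm E) :=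
      h2.weaken (fun _ h => List.mem_cons_of_mem _ h)
    refine ((toFm_elim (X := toFm (dand D E)) fun c2 hc2 => ded ?_).mp h2')
    have hm : c1 ∪ c2 ∈ dand D E := by
      simp only [dand, Finset.mem_biUnion, Finset.mem_image]
      exact ⟨c1, hc1, c2, hc2, rfl⟩
    refine (toFm_intro hm).mp (conj_intro' fun u hu => ?_)
    rcases Finset.mem_union.1 hu with hu | hu
    · exact (conj_elim hu).mp (hyp (List.mem_cons_of_mem _ (List.mem_cons_self)))
    · exact (conj_elim hu).mp (hyp (List.mem_cons_self))

theorem toFm_dor {G : List Fm} (D E : Finset (Finset Fm)) :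
    Th G ((toFm (D ∪ E)).iff ((toFm D).or (toFm E))) := by
  refine iff_intro (toFm_elim fun c hc => ?_) ?_
  · rcases Finset.mem_union.1 hc with hc | hc
    · exact (toFm_intro hc).impL (ded (or_inl _ (hyp (List.mem_cons_self))))
    · exact (toFm_intro hc).impL (ded (or_inr _ (hyp (List.mem_cons_self))))
  · exact (Th.ax (IPC.or_elim _ _ _)).mp
      (toFm_elim fun c hc => toFm_intro (Finset.mem_union_left _ hc)) |>.mp
      (toFm_elim fun c hc => toFm_intro (Finset.mem_union_right _ hc))

end Th

/-! ### The normal form function -/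

noncomputable def nf : Finset ℕ → Fm → Finset (Finset Fm)
  | _, .bot => ∅
  | T, .atom n => if n ∈ T then {∅} else {{Fm.atom n}}
  | T, .and A B => dand (nf T A) (nf T B)
  | T, .or A B => nf T A ∪ nf T B
  | T, .imp A B =>
      ((nf T A).toList.map fun d =>
        if d = ∅ then nf T B
        else {{(conjFm d).imp (toFm (nf (T ∪ d.biUnion Fm.atoms) B))}}).foldr dand {∅}

namespace Th

/-- `toFm` of a fold of `dand`s is the big conjunction. -/
theorem toFm_foldr {G : List Fm} (L : List (Finset (Finset Fm))) :
    Th G ((toFm (L.foldr dand {∅})).iff (bigAndL (L.map toFm))) := by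
  induction L with
  | nil =>
    refine (toFm_single ∅).iff_trans ?_
    rw [conjFm, Finset.toList_empty]
    exact iff_refl _
  | cons D L ih =>
    exact (toFm_dand D (L.foldr dand {∅})).iff_trans (and_congr (iff_refl _) ih)

/-- `(⋁ᵢ Cᵢ) → B` is equivalent to `⋀ᵢ (Cᵢ → B)`. -/
theorem or_imp {G : List Fm} (D : Finset (Finset Fm)) (B : Fm) :
    Th G (((toFm D).imp B).iff (bigAndL (D.toList.map fun d => (conjFm d).imp B))) := by
  refine iff_intro (ded (bigAnd_intro fun a ha => ?_)) (ded ?_)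
  · obtain ⟨d, hd, rfl⟩ := List.mem_map.1 ha
    exact ((toFm_intro (Finset.mem_toList.1 hd)).impL (hyp (List.mem_cons_self)))
  · refine toFm_elim fun c hc => ?_
    exact bigAnd_elim (List.mem_map.2 ⟨c, Finset.mem_toList.2 hc, rfl⟩)
      (hyp (List.mem_cons_self))

theorem bigAnd_congr {G : List Fm} {α : Type} {l : List α} {f h : α → Fm}
    (H : ∀ x ∈ l, Th G ((f x).iff (h x))) :
    Th G ((bigAndL (l.map f)).iff (bigAndL (l.map h))) := by
  induction l with
  | nil => exact iff_refl _
  | cons a l ih =>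
    exact and_congr (H a (List.mem_cons_self))
      (ih fun x hx => H x (List.mem_cons_of_mem _ hx))

end Th

/-- For implication-free `A`, all units in `nf T A` are atoms of `A` not in `T`. -/
theorem nf_NI_units {A : Fm} (hA : NI A) :
    ∀ (T : Finset ℕ), ∀ c ∈ nf T A, ∀ u ∈ c, ∃ n, u = Fm.atom n ∧ n ∈ A.atoms ∧ n ∉ T := by
  induction hA with
  | bot => intro T c hc; simp [nf] at hc
  | atom n =>
    intro T c hc u hu
    by_cases hn : n ∈ T
    · simp [nf, hn] at hc; subst hc; simp at hu
    · simp [nf, hn] at hc; subst hc; simp at hu; subst hu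
      exact ⟨n, rfl, by simp [Fm.atoms], hn⟩
  | and h1 h2 ih1 ih2 =>
    intro T c hc u hu
    simp only [nf, dand, Finset.mem_biUnion, Finset.mem_image] at hc
    obtain ⟨c1, hc1, c2, hc2, rfl⟩ := hc
    rcases Finset.mem_union.1 hu with hu | hu
    · obtain ⟨n, rfl, hn, hnT⟩ := ih1 T c1 hc1 u hu
      exact ⟨n, rfl, Finset.mem_union_left _ hn, hnT⟩
    · obtain ⟨n, rfl, hn, hnT⟩ := ih2 T c2 hc2 u hu
      exact ⟨n, rfl, Finset.mem_union_right _ hn, hnT⟩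
  | or h1 h2 ih1 ih2 =>
    intro T c hc u hu
    rcases Finset.mem_union.1 hc with hc | hc
    · obtain ⟨n, rfl, hn, hnT⟩ := ih1 T c hc u hu
      exact ⟨n, rfl, Finset.mem_union_left _ hn, hnT⟩
    · obtain ⟨n, rfl, hn, hnT⟩ := ih2 T c hc u hu
      exact ⟨n, rfl, Finset.mem_union_right _ hn, hnT⟩

theorem NI.toNNIL {A : Fm} (h : NI A) : NNIL A := by
  induction h with
  | bot => exact .bot
  | atom n => exact .atom n
  | and _ _ ih1 ih2 => exact .and ih1 ih2
  | or _ _ ih1 ih2 => exact .or ih1 ih2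

/-- Correctness of the normal form, relative to a context proving the atoms in `T`. -/
theorem nf_correct : ∀ (A : Fm), NNIL A →
    ∀ (T : Finset ℕ) (G : List Fm), (∀ n ∈ T, Th G (Fm.atom n)) →
      Th G (A.iff (toFm (nf T A))) := by
  intro A
  induction A with
  | bot =>
    intro _ T G _
    exact (Th.iff_refl _).iff_trans Th.toFm_empty.iff_symm
  | atom n =>
    intro _ T G hT
    by_cases hn : n ∈ T
    · rw [nf]; simp only [if_pos hn]
      have h1 : Th G ((toFm ({∅} : Finset (Finset Fm))).iff Fm.top) := by
        refine (Th.toFm_single ∅).iff_trans ?_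
        rw [conjFm, Finset.toList_empty]; exact Th.iff_refl _
      have h2 : Th G ((Fm.atom n).iff Fm.top) :=
        Th.iff_intro (Th.ded (Th.top_ _))
          (Th.ded ((hT n hn).weaken (fun _ h => List.mem_cons_of_mem _ h)))
      exact h2.iff_trans h1.iff_symm
    · rw [nf]; simp only [if_neg hn]
      exact ((Th.toFm_single _).iff_trans (Th.conj_single _)).iff_symm
  | and A B ihA ihB =>
    intro hA T G hT
    cases hA with
    | and h1 h2 =>
      exact ((ihA h1 T G hT).and_congr (ihB h2 T G hT)).iff_trans (Th.toFm_dand _ _).iff_symm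
  | or A B ihA ihB =>
    intro hA T G hT
    cases hA with
    | or h1 h2 =>
      exact ((ihA h1 T G hT).or_congr (ihB h2 T G hT)).iff_trans (Th.toFm_dor _ _).iff_symm
  | imp A B ihA ihB =>
    intro hA T G hT
    cases hA with
    | imp hNI hB =>
      rw [nf]
      refine Th.iff_trans ?_ (Th.toFm_foldr _).iff_symm
      rw [List.map_map]
      refine (((ihA hNI.toNNIL T G hT).imp_congr_ant).iff_trans (Th.or_imp _ B)).iff_trans ?_
      refine Th.bigAnd_congr fun d hd => ?_
      have hd' : d ∈ nf T A := Finset.mem_toList.1 hd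
      by_cases hde : d = ∅
      · subst hde
        simp only [Function.comp, if_pos rfl]
        refine Th.iff_trans ?_ (ihB hB T G hT)
        rw [conjFm, Finset.toList_empty]
        exact Th.top_imp B
      · simp only [Function.comp, if_neg hde]
        refine Th.iff_trans ?_ ((Th.toFm_single _).iff_trans (Th.conj_single _)).iff_symm
        refine Th.imp_congr_hyp ?_
        refine ihB hB (T ∪ d.biUnion Fm.atoms) (conjFm d :: G) ?_
        intro n hn
        rcases Finset.mem_union.1 hn with hn | hn
        · exact (hT n hn).weaken (fun _ h => List.mem_cons_of_mem _ h)
        · obtain ⟨u, hu, hnu⟩ := Finset.mem_biUnion.1 hn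
          obtain ⟨m, rfl, _, _⟩ := nf_NI_units hNI T d hd' u hu
          simp only [Fm.atoms, Finset.mem_singleton] at hnu
          subst hnu
          exact (Th.conj_elim hu).mp (Th.hyp (List.mem_cons_self))


/-! ### Finiteness: the set of possible normal form units -/

noncomputable def unitsOf (R : Finset ℕ) : Finset Fm :=
  R.image Fm.atom ∪
    ((R.powerset.erase ∅).attach.biUnion fun T =>
      ((unitsOf (R \ T.1)).powerset.powerset).image fun D =>
        (conjFm (T.1.image Fm.atom)).imp (toFm D))
termination_by R.card
decreasing_by
  have h := T.2
  rw [Finset.mem_erase, Finset.mem_powerset] at h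
  exact Finset.card_lt_card (Finset.sdiff_ssubset h.2 (Finset.nonempty_iff_ne_empty.2 h.1))

theorem mem_foldr_dand {L : List (Finset (Finset Fm))} : ∀ {c : Finset Fm} {u : Fm},
    c ∈ L.foldr dand {∅} → u ∈ c → ∃ X ∈ L, ∃ c' ∈ X, u ∈ c' := by
  induction L with
  | nil =>
    intro c u hc hu
    rw [List.foldr_nil, Finset.mem_singleton] at hc
    subst hc; simp at hu
  | cons D L ih =>
    intro c u hc hu
    rw [List.foldr_cons] at hc
    simp only [dand, Finset.mem_biUnion, Finset.mem_image] at hc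
    obtain ⟨c1, hc1, c2, hc2, rfl⟩ := hc
    rcases Finset.mem_union.1 hu with hu | hu
    · exact ⟨D, List.mem_cons_self, c1, hc1, hu⟩
    · obtain ⟨X, hX, c', hc', hu'⟩ := ih hc2 hu
      exact ⟨X, List.mem_cons_of_mem _ hX, c', hc', hu'⟩

/-- Every unit of `nf T A` lies in `unitsOf (S \ T)`. -/
theorem nf_units : ∀ (A : Fm), NNIL A → ∀ (T S : Finset ℕ), A.atoms ⊆ S →
    ∀ c ∈ nf T A, ∀ u ∈ c, u ∈ unitsOf (S \ T) := by
  intro A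
  induction A with
  | bot => intro _ T S _ c hc; simp [nf] at hc
  | atom n =>
    intro _ T S hS c hc u hu
    by_cases hn : n ∈ T
    · simp [nf, hn] at hc; subst hc; simp at hu
    · simp [nf, hn] at hc; subst hc; simp at hu; subst hu
      rw [unitsOf]
      refine Finset.mem_union_left _ (Finset.mem_image.2 ⟨n, ?_, rfl⟩)
      exact Finset.mem_sdiff.2 ⟨hS (by simp [Fm.atoms]), hn⟩
  | and A B ihA ihB =>
    intro hAB T S hS c hc u hu
    cases hAB with
    | and h1 h2 =>
      simp only [nf, dand, Finset.mem_biUnion, Finset.mem_image] at hc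
      obtain ⟨c1, hc1, c2, hc2, rfl⟩ := hc
      have hSA : A.atoms ⊆ S := fun n hn => hS (Finset.mem_union_left _ hn)
      have hSB : B.atoms ⊆ S := fun n hn => hS (Finset.mem_union_right _ hn)
      rcases Finset.mem_union.1 hu with hu | hu
      · exact ihA h1 T S hSA c1 hc1 u hu
      · exact ihB h2 T S hSB c2 hc2 u hu
  | or A B ihA ihB =>
    intro hAB T S hS c hc u hu
    cases hAB with
    | or h1 h2 =>
      have hSA : A.atoms ⊆ S := fun n hn => hS (Finset.mem_union_left _ hn)
      have hSB : B.atoms ⊆ S := fun n hn => hS (Finset.mem_union_right _ hn)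
      rcases Finset.mem_union.1 hc with hc | hc
      · exact ihA h1 T S hSA c hc u hu
      · exact ihB h2 T S hSB c hc u hu
  | imp A B ihA ihB =>
    intro hAB T S hS c hc u hu
    cases hAB with
    | imp hNI hB =>
      have hSA : A.atoms ⊆ S := fun n hn => hS (Finset.mem_union_left _ hn)
      have hSB : B.atoms ⊆ S := fun n hn => hS (Finset.mem_union_right _ hn)
      rw [nf] at hc
      obtain ⟨X, hX, c', hc', hu'⟩ := mem_foldr_dand hc hu
      obtain ⟨d, hd, rfl⟩ := List.mem_map.1 hX
      have hd' : d ∈ nf T A := Finset.mem_toList.1 hd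
      by_cases hde : d = ∅
      · rw [if_pos hde] at hc'
        exact ihB hB T S hSB c' hc' u hu'
      · rw [if_neg hde] at hc'
        rw [Finset.mem_singleton] at hc'
        subst hc'
        rw [Finset.mem_singleton] at hu'
        subst hu'
        -- the antecedent's atoms
        set ad := d.biUnion Fm.atoms with had
        have hatomic := nf_NI_units hNI T d hd'
        have hdeq : d = ad.image Fm.atom := by
          ext v
          constructor
          · intro hv
            obtain ⟨m, rfl, _, _⟩ := hatomic v hv
            exact Finset.mem_image.2 ⟨m, Finset.mem_biUnion.2
              ⟨Fm.atom m, hv, by simp [Fm.atoms]⟩, rfl⟩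
          · intro hv
            obtain ⟨m, hm, rfl⟩ := Finset.mem_image.1 hv
            obtain ⟨w, hw, hmw⟩ := Finset.mem_biUnion.1 hm
            obtain ⟨k, rfl, _, _⟩ := hatomic w hw
            simp only [Fm.atoms, Finset.mem_singleton] at hmw
            subst hmw
            exact hw
        have hadsub : ad ⊆ S \ T := by
          intro m hm
          obtain ⟨w, hw, hmw⟩ := Finset.mem_biUnion.1 hm
          obtain ⟨k, rfl, hk1, hk2⟩ := hatomic w hw
          simp only [Fm.atoms, Finset.mem_singleton] at hmw
          subst hmw
          exact Finset.mem_sdiff.2 ⟨hSA hk1, hk2⟩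
        have hadne : ad ≠ ∅ := by
          obtain ⟨v, hv⟩ := Finset.nonempty_iff_ne_empty.2 hde
          obtain ⟨m, rfl, _, _⟩ := hatomic v hv
          intro h
          have : m ∈ ad := Finset.mem_biUnion.2 ⟨Fm.atom m, hv, by simp [Fm.atoms]⟩
          simp [h] at this
        have hDmem : nf (T ∪ ad) B ∈ (unitsOf ((S \ T) \ ad)).powerset.powerset := by
          rw [Finset.mem_powerset]
          intro c2 hc2
          rw [Finset.mem_powerset]
          intro u2 hu2
          have := ihB hB (T ∪ ad) S hSB c2 hc2 u2 hu2
          have heq : S \ (T ∪ ad) = (S \ T) \ ad := by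
            ext m; simp [Finset.mem_sdiff]; tauto
          rwa [heq] at this
        rw [unitsOf]
        refine Finset.mem_union_right _ (Finset.mem_biUnion.2
          ⟨⟨ad, ?_⟩, Finset.mem_attach _ _, ?_⟩)
        · exact Finset.mem_erase.2 ⟨hadne, Finset.mem_powerset.2 hadsub⟩
        · exact Finset.mem_image.2 ⟨nf (T ∪ ad) B, hDmem, by rw [← hdeq]⟩
theorem stmt_8 (S : Finset ℕ) :
    ∃ L : Finset Fm, ∀ A : Fm, NNIL A → A.atoms ⊆ S →
      ∃ B ∈ L, IPC (A.iff B) := by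
  refine ⟨((unitsOf S).powerset.powerset).image toFm, fun A hA hS => ?_⟩
  refine ⟨toFm (nf ∅ A), ?_, ?_⟩
  · refine Finset.mem_image.2 ⟨nf ∅ A, ?_, rfl⟩
    rw [Finset.mem_powerset]
    intro c hc
    rw [Finset.mem_powerset]
    intro u hu
    have := nf_units A hA ∅ S hS c hc u hu
    simpa using this
  · exact (nf_correct A hA ∅ [] (by simp)).toIPC
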